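/- Let N ≥ 1, fix a coordinate x₀, and let P : ℝ^N → ℝ^N satisfy monotonicity, strict monotonicity, constant additivity, and connectedness. Suppose f, f̃ ∈ ℝ^N are such that f_n := P^n f − P^n f(x₀)·𝟙 has a finite accumulation point g and f̃_n := P^n f̃ − P^n f̃(x₀)·𝟙 has a finite accumulation point g̃. Then g = g̃, and both sequences converge in the sup norm to this common limit. -/

import Mathlib

open Filter

set_option linter.unusedSectionVars false


namespace Stmt2Aux

variable {ι : Type*} [Fintype ι] [Nonempty ι]

noncomputable def sMax (u : ι → ℝ) : ℝ := Finset.univ.sup' Finset.univ_nonempty u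
noncomputable def sMin (u : ι → ℝ) : ℝ := Finset.univ.inf' Finset.univ_nonempty u
noncomputable def osc (u : ι → ℝ) : ℝ := sMax u - sMin u

lemma le_sMax (u : ι → ℝ) (x : ι) : u x ≤ sMax u :=
  Finset.le_sup' u (Finset.mem_univ x)

lemma sMin_le (u : ι → ℝ) (x : ι) : sMin u ≤ u x :=
  Finset.inf'_le u (Finset.mem_univ x)

lemma sMax_le {u : ι → ℝ} {b : ℝ} (h : ∀ x, u x ≤ b) : sMax u ≤ b :=
  Finset.sup'_le _ _ fun x _ => h x

lemma le_sMin {u : ι → ℝ} {b : ℝ} (h : ∀ x, b ≤ u x) : b ≤ sMin u :=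
  Finset.le_inf' _ _ fun x _ => h x

lemma exists_eq_sMax (u : ι → ℝ) : ∃ x, sMax u = u x := by
  obtain ⟨x, -, hx⟩ := Finset.exists_mem_eq_sup' (Finset.univ_nonempty (α := ι)) u
  exact ⟨x, hx⟩

lemma exists_eq_sMin (u : ι → ℝ) : ∃ x, sMin u = u x := by
  obtain ⟨x, -, hx⟩ := Finset.exists_mem_eq_inf' (Finset.univ_nonempty (α := ι)) u
  exact ⟨x, hx⟩

lemma sMin_le_sMax (u : ι → ℝ) : sMin u ≤ sMax u := by
  obtain ⟨x⟩ := ‹Nonempty ι›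
  exact (sMin_le u x).trans (le_sMax u x)

lemma osc_nonneg (u : ι → ℝ) : 0 ≤ osc u := sub_nonneg.2 (sMin_le_sMax u)

lemma sMax_add_const (u : ι → ℝ) (c : ℝ) : sMax (fun x => u x + c) = sMax u + c := by
  apply le_antisymm
  · exact sMax_le fun x => (by linarith [le_sMax u x])
  · obtain ⟨x, hx⟩ := exists_eq_sMax u
    rw [hx]
    exact le_sMax (fun x => u x + c) x

lemma sMin_add_const (u : ι → ℝ) (c : ℝ) : sMin (fun x => u x + c) = sMin u + c := by
  apply le_antisymm
  · obtain ⟨x, hx⟩ := exists_eq_sMin u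
    rw [hx]
    exact sMin_le (fun x => u x + c) x
  · exact le_sMin fun x => (by linarith [sMin_le u x])

lemma osc_add_const (u : ι → ℝ) (c : ℝ) : osc (fun x => u x + c) = osc u := by
  simp [osc, sMax_add_const, sMin_add_const]

lemma osc_pos_of_ne {u : ι → ℝ} {x y : ι} (h : u x ≠ u y) : 0 < osc u := by
  rcases lt_or_gt_of_ne h with h' | h'
  · exact sub_pos.2 (lt_of_le_of_lt (sMin_le u x) (lt_of_lt_of_le h' (le_sMax u y)))
  · exact sub_pos.2 (lt_of_le_of_lt (sMin_le u y) (lt_of_lt_of_le h' (le_sMax u x)))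

lemma lipschitz_sMax : LipschitzWith 1 (sMax (ι := ι)) := by
  apply LipschitzWith.of_dist_le_mul
  intro u v
  rw [NNReal.coe_one, one_mul, Real.dist_eq, abs_sub_le_iff]
  constructor
  · obtain ⟨x, hx⟩ := exists_eq_sMax u
    rw [hx]
    have h1 : v x ≤ sMax v := le_sMax v x
    have := dist_le_pi_dist u v x
    rw [Real.dist_eq] at this
    have := le_abs_self (u x - v x)
    linarith
  · obtain ⟨x, hx⟩ := exists_eq_sMax v
    rw [hx]
    have h1 : u x ≤ sMax u := le_sMax u x
    have := dist_le_pi_dist u v x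
    rw [Real.dist_eq] at this
    have := neg_abs_le (u x - v x)
    linarith

lemma lipschitz_sMin : LipschitzWith 1 (sMin (ι := ι)) := by
  apply LipschitzWith.of_dist_le_mul
  intro u v
  rw [NNReal.coe_one, one_mul, Real.dist_eq, abs_sub_le_iff]
  constructor
  · obtain ⟨x, hx⟩ := exists_eq_sMin v
    rw [hx]
    have h1 : sMin u ≤ u x := sMin_le u x
    have := dist_le_pi_dist u v x
    rw [Real.dist_eq] at this
    have := le_abs_self (u x - v x)
    linarith
  · obtain ⟨x, hx⟩ := exists_eq_sMin u
    rw [hx]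
    have h1 : sMin v ≤ v x := sMin_le v x
    have := dist_le_pi_dist u v x
    rw [Real.dist_eq] at this
    have := neg_abs_le (u x - v x)
    linarith

lemma continuous_osc : Continuous (osc (ι := ι)) :=
  (lipschitz_sMax.continuous).sub (lipschitz_sMin.continuous)


lemma osc_const (c : ℝ) : osc (fun _ : ι => c) = 0 := by
  obtain ⟨x, hx⟩ := exists_eq_sMax (fun _ : ι => c)
  obtain ⟨y, hy⟩ := exists_eq_sMin (fun _ : ι => c)
  simp [osc, hx, hy]

section Pmap

variable (P : (ι → ℝ) → (ι → ℝ))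

lemma cadd_iter (cadd : ∀ (f : ι → ℝ) (c : ℝ), P (fun x => f x + c) = fun x => P f x + c)
    (n : ℕ) (u : ι → ℝ) (c : ℝ) :
    P^[n] (fun x => u x + c) = fun x => P^[n] u x + c := by
  induction n with
  | zero => simp
  | succ n ih =>
    rw [Function.iterate_succ_apply', Function.iterate_succ_apply', ih, cadd]

lemma mono_iter (mono : ∀ f g : ι → ℝ, (∀ x, g x ≤ f x) → ∀ x, P g x ≤ P f x)
    (n : ℕ) (u v : ι → ℝ) (h : ∀ x, v x ≤ u x) : ∀ x, P^[n] v x ≤ P^[n] u x := by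
  induction n with
  | zero => simpa
  | succ n ih =>
    intro x
    rw [Function.iterate_succ_apply', Function.iterate_succ_apply']
    exact mono _ _ ih x

lemma lipschitzP (mono : ∀ f g : ι → ℝ, (∀ x, g x ≤ f x) → ∀ x, P g x ≤ P f x)
    (cadd : ∀ (f : ι → ℝ) (c : ℝ), P (fun x => f x + c) = fun x => P f x + c) :
    LipschitzWith 1 P := by
  apply LipschitzWith.of_dist_le_mul
  intro u v
  rw [NNReal.coe_one, one_mul]
  rw [dist_pi_le_iff dist_nonneg]
  intro x
  have hle : ∀ y, |u y - v y| ≤ dist u v := by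
    intro y
    have := dist_le_pi_dist u v y
    rwa [Real.dist_eq] at this
  have h1 : ∀ y, u y ≤ v y + dist u v := by
    intro y
    have := le_abs_self (u y - v y)
    linarith [hle y]
  have h2 : ∀ y, v y + -(dist u v) ≤ u y := by
    intro y
    have := neg_abs_le (u y - v y)
    linarith [hle y]
  have hu : P u x ≤ P v x + dist u v := by
    have := mono (fun y => v y + dist u v) u h1 x
    rwa [cadd] at this
  have hl : P v x + -(dist u v) ≤ P u x := by
    have := mono u (fun y => v y + -(dist u v)) h2 x
    rwa [cadd] at this
  rw [Real.dist_eq, abs_le]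
  constructor <;> linarith

lemma sMax_step (mono : ∀ f g : ι → ℝ, (∀ x, g x ≤ f x) → ∀ x, P g x ≤ P f x)
    (cadd : ∀ (f : ι → ℝ) (c : ℝ), P (fun x => f x + c) = fun x => P f x + c)
    (u v : ι → ℝ) :
    sMax (fun x => P u x - P v x) ≤ sMax (fun x => u x - v x) := by
  set β := sMax (fun x => u x - v x) with hβ
  apply sMax_le
  intro x
  have h1 : ∀ y, u y ≤ v y + β := by
    intro y
    have := le_sMax (fun x => u x - v x) y
    linarith
  have := mono (fun y => v y + β) u h1 x
  rw [cadd] at this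
  simp only [] at this
  linarith

lemma sMin_step (mono : ∀ f g : ι → ℝ, (∀ x, g x ≤ f x) → ∀ x, P g x ≤ P f x)
    (cadd : ∀ (f : ι → ℝ) (c : ℝ), P (fun x => f x + c) = fun x => P f x + c)
    (u v : ι → ℝ) :
    sMin (fun x => u x - v x) ≤ sMin (fun x => P u x - P v x) := by
  set α := sMin (fun x => u x - v x) with hα
  apply le_sMin
  intro x
  have h1 : ∀ y, v y + α ≤ u y := by
    intro y
    have := sMin_le (fun x => u x - v x) y
    linarith
  have := mono u (fun y => v y + α) h1 x
  rw [cadd] at this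
  simp only [] at this
  linarith

lemma osc_antitone (mono : ∀ f g : ι → ℝ, (∀ x, g x ≤ f x) → ∀ x, P g x ≤ P f x)
    (cadd : ∀ (f : ι → ℝ) (c : ℝ), P (fun x => f x + c) = fun x => P f x + c)
    (u v : ι → ℝ) :
    Antitone (fun n => osc (fun x => P^[n] u x - P^[n] v x)) := by
  apply antitone_nat_of_succ_le
  intro n
  have h1 := sMax_step P mono cadd (P^[n] u) (P^[n] v)
  have h2 := sMin_step P mono cadd (P^[n] u) (P^[n] v)
  simp only [osc]
  simp only [Function.iterate_succ_apply']
  linarith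

lemma osc_strict (mono : ∀ f g : ι → ℝ, (∀ x, g x ≤ f x) → ∀ x, P g x ≤ P f x)
    (cadd : ∀ (f : ι → ℝ) (c : ℝ), P (fun x => f x + c) = fun x => P f x + c)
    {n₀ : ℕ}
    (hconn : ∀ f g : ι → ℝ, (∀ x, g x ≤ f x) → (∃ x, g x < f x) →
      ∀ y, P^[n₀] g y < P^[n₀] f y)
    (u v : ι → ℝ) (hpos : 0 < osc (fun x => u x - v x)) :
    osc (fun x => P^[n₀] u x - P^[n₀] v x) < osc (fun x => u x - v x) := by
  set α := sMin (fun x => u x - v x) with hα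
  set β := sMax (fun x => u x - v x) with hβ
  have hαβ : α < β := by
    have := osc_nonneg (fun x => u x - v x)
    simp only [osc] at hpos
    linarith
  -- lower bound strictly improves
  have hlow : α < sMin (fun x => P^[n₀] u x - P^[n₀] v x) := by
    have hle : ∀ x, v x + α ≤ u x := by
      intro x
      have := sMin_le (fun x => u x - v x) x
      linarith
    have hlt : ∃ x, v x + α < u x := by
      obtain ⟨x, hx⟩ := exists_eq_sMax (fun x => u x - v x)
      refine ⟨x, ?_⟩
      have : u x - v x = β := hx.symm
      linarith
    have h := hconn u (fun x => v x + α) hle hlt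
    rw [cadd_iter P cadd] at h
    obtain ⟨y, hy⟩ := exists_eq_sMin (fun x => P^[n₀] u x - P^[n₀] v x)
    rw [hy]
    have := h y
    simp only [] at this
    linarith
  have hhigh : sMax (fun x => P^[n₀] u x - P^[n₀] v x) < β := by
    have hle : ∀ x, u x + -β ≤ v x := by
      intro x
      have := le_sMax (fun x => u x - v x) x
      linarith
    have hlt : ∃ x, u x + -β < v x := by
      obtain ⟨x, hx⟩ := exists_eq_sMin (fun x => u x - v x)
      refine ⟨x, ?_⟩
      have : u x - v x = α := hx.symm
      linarith
    have h := hconn v (fun x => u x + -β) hle hlt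
    rw [cadd_iter P cadd] at h
    obtain ⟨y, hy⟩ := exists_eq_sMax (fun x => P^[n₀] u x - P^[n₀] v x)
    rw [hy]
    have := h y
    simp only [] at this
    linarith
  simp only [osc]
  linarith

lemma norm_shift (cadd : ∀ (f : ι → ℝ) (c : ℝ), P (fun x => f x + c) = fun x => P f x + c)
    (n : ℕ) (f : ι → ℝ) (m : ℕ) (x₀ : ι) :
    P^[n] (fun x => P^[m] f x - P^[m] f x₀) = fun x => P^[n + m] f x - P^[m] f x₀ := by
  have h1 : (fun x => P^[m] f x - P^[m] f x₀) = fun x => P^[m] f x + -(P^[m] f x₀) := by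
    funext x; ring
  rw [h1, cadd_iter P cadd]
  funext x
  rw [Function.iterate_add_apply]
  ring

/-- The key uniqueness lemma: two accumulation points along a common subsequence
of the normalized iterates of two initial conditions coincide. -/
lemma lemA (mono : ∀ f g : ι → ℝ, (∀ x, g x ≤ f x) → ∀ x, P g x ≤ P f x)
    (cadd : ∀ (f : ι → ℝ) (c : ℝ), P (fun x => f x + c) = fun x => P f x + c)
    (conn : ∃ n₀ : ℕ, 0 < n₀ ∧ ∀ f g : ι → ℝ, (∀ x, g x ≤ f x) → (∃ x, g x < f x) →
      ∀ y, P^[n₀] g y < P^[n₀] f y)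
    (x₀ : ι) (f fh g h : ι → ℝ) (φ : ℕ → ℕ) (hφ : StrictMono φ)
    (hg : Tendsto (fun k => fun x => P^[φ k] f x - P^[φ k] f x₀) atTop (nhds g))
    (hh : Tendsto (fun k => fun x => P^[φ k] fh x - P^[φ k] fh x₀) atTop (nhds h)) :
    g = h := by
  obtain ⟨n₀, hn₀, hconn⟩ := conn
  set ω : ℕ → ℝ := fun n => osc (fun x => P^[n] f x - P^[n] fh x) with hω
  have hante : Antitone ω := osc_antitone P mono cadd f fh
  have hbdd : BddBelow (Set.range ω) := ⟨0, fun r ⟨n, hn⟩ => hn ▸ osc_nonneg _⟩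
  set L : ℝ := ⨅ n, ω n with hL
  have hωlim : Tendsto ω atTop (nhds L) := tendsto_atTop_ciInf hante hbdd
  -- ω in normalized form
  have hωnorm : ∀ n, ω n = osc (fun x =>
      (P^[n] f x - P^[n] f x₀) - (P^[n] fh x - P^[n] fh x₀)) := by
    intro n
    have : (fun x => (P^[n] f x - P^[n] f x₀) - (P^[n] fh x - P^[n] fh x₀)) =
        fun x => (P^[n] f x - P^[n] fh x) + (P^[n] fh x₀ - P^[n] f x₀) := by
      funext x; ring
    rw [this, osc_add_const]
  -- pointwise limits
  have hgx : ∀ x, Tendsto (fun k => P^[φ k] f x - P^[φ k] f x₀) atTop (nhds (g x)) :=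
    tendsto_pi_nhds.1 hg
  have hhx : ∀ x, Tendsto (fun k => P^[φ k] fh x - P^[φ k] fh x₀) atTop (nhds (h x)) :=
    tendsto_pi_nhds.1 hh
  -- the difference tends to g - h in the product space
  have hsub : Tendsto (fun k => fun x =>
      (P^[φ k] f x - P^[φ k] f x₀) - (P^[φ k] fh x - P^[φ k] fh x₀)) atTop
      (nhds (fun x => g x - h x)) := by
    rw [tendsto_pi_nhds]
    intro x
    exact (hgx x).sub (hhx x)
  have hlim1 : Tendsto (fun k => ω (φ k)) atTop (nhds (osc (fun x => g x - h x))) := by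
    have := (continuous_osc.tendsto _).comp hsub
    simpa [hωnorm, Function.comp_def] using this
  have hgh : osc (fun x => g x - h x) = L :=
    tendsto_nhds_unique hlim1 (hωlim.comp hφ.tendsto_atTop)
  -- the shifted sequence
  have hPn : Continuous (P^[n₀]) := ((lipschitzP P mono cadd).iterate n₀).continuous
  have hkey : ∀ m, ω (n₀ + m) = osc (fun x =>
      P^[n₀] (fun y => P^[m] f y - P^[m] f x₀) x -
      P^[n₀] (fun y => P^[m] fh y - P^[m] fh x₀) x) := by
    intro m
    rw [norm_shift P cadd, norm_shift P cadd]
    have : (fun x => (P^[n₀ + m] f x - P^[m] f x₀) - (P^[n₀ + m] fh x - P^[m] fh x₀)) =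
        fun x => (P^[n₀ + m] f x - P^[n₀ + m] fh x) + (P^[m] fh x₀ - P^[m] f x₀) := by
      funext x; ring
    rw [this, osc_add_const]
  have hsub2 : Tendsto (fun k => fun x =>
      P^[n₀] (fun y => P^[φ k] f y - P^[φ k] f x₀) x -
      P^[n₀] (fun y => P^[φ k] fh y - P^[φ k] fh x₀) x) atTop
      (nhds (fun x => P^[n₀] g x - P^[n₀] h x)) := by
    rw [tendsto_pi_nhds]
    intro x
    have h1 : Tendsto (fun k => P^[n₀] (fun y => P^[φ k] f y - P^[φ k] f x₀)) atTop
        (nhds (P^[n₀] g)) := (hPn.tendsto g).comp hg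
    have h2 : Tendsto (fun k => P^[n₀] (fun y => P^[φ k] fh y - P^[φ k] fh x₀)) atTop
        (nhds (P^[n₀] h)) := (hPn.tendsto h).comp hh
    exact ((tendsto_pi_nhds.1 h1) x).sub ((tendsto_pi_nhds.1 h2) x)
  have hlim2 : Tendsto (fun k => ω (n₀ + φ k)) atTop
      (nhds (osc (fun x => P^[n₀] g x - P^[n₀] h x))) := by
    have := (continuous_osc.tendsto _).comp hsub2
    simpa [hkey, Function.comp_def] using this
  have hlim2' : Tendsto (fun k => ω (n₀ + φ k)) atTop (nhds L) := by
    refine hωlim.comp (tendsto_atTop_mono (fun k => ?_) hφ.tendsto_atTop)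
    exact Nat.le_add_left (φ k) n₀
  have hgh2 : osc (fun x => P^[n₀] g x - P^[n₀] h x) = L :=
    tendsto_nhds_unique hlim2 hlim2'
  -- x₀-normalization of the limits
  have hgx₀ : g x₀ = 0 := by
    have := hgx x₀
    simp only [sub_self] at this
    exact tendsto_nhds_unique this tendsto_const_nhds
  have hhx₀ : h x₀ = 0 := by
    have := hhx x₀
    simp only [sub_self] at this
    exact tendsto_nhds_unique this tendsto_const_nhds
  by_contra hne
  have hxne : ∃ x, g x ≠ h x := by
    by_contra hc
    push_neg at hc
    exact hne (funext hc)
  obtain ⟨x, hx⟩ := hxne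
  have hpos : 0 < osc (fun x => g x - h x) := by
    apply osc_pos_of_ne (x := x) (y := x₀)
    simp only [hgx₀, hhx₀, sub_zero]
    exact sub_ne_zero.2 hx
  have := osc_strict P mono cadd hconn g h hpos
  rw [hgh, hgh2] at this
  exact lt_irrefl L this

lemma T_kills_const (cadd : ∀ (f : ι → ℝ) (c : ℝ), P (fun x => f x + c) = fun x => P f x + c)
    (u : ι → ℝ) (x₀ : ι) :
    (fun x => P u x - P u x₀) =
      (fun x => P (fun y => u y - u x₀) x - P (fun y => u y - u x₀) x₀) := by
  have h1 : (fun y => u y - u x₀) = fun y => u y + -(u x₀) := by funext y; ring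
  rw [h1, cadd]
  funext x
  simp only []
  ring

/-- Convergence to the accumulation point. -/
lemma convLem (mono : ∀ f g : ι → ℝ, (∀ x, g x ≤ f x) → ∀ x, P g x ≤ P f x)
    (cadd : ∀ (f : ι → ℝ) (c : ℝ), P (fun x => f x + c) = fun x => P f x + c)
    (conn : ∃ n₀ : ℕ, 0 < n₀ ∧ ∀ f g : ι → ℝ, (∀ x, g x ≤ f x) → (∃ x, g x < f x) →
      ∀ y, P^[n₀] g y < P^[n₀] f y)
    (x₀ : ι) (f g : ι → ℝ) (φ : ℕ → ℕ) (hφ : StrictMono φ)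
    (hg : Tendsto (fun k => fun x => P^[φ k] f x - P^[φ k] f x₀) atTop (nhds g)) :
    Tendsto (fun n => fun x => P^[n] f x - P^[n] f x₀) atTop (nhds g) := by
  have hgx : ∀ x, Tendsto (fun k => P^[φ k] f x - P^[φ k] f x₀) atTop (nhds (g x)) :=
    tendsto_pi_nhds.1 hg
  have hgx₀ : g x₀ = 0 := by
    have := hgx x₀
    simp only [sub_self] at this
    exact tendsto_nhds_unique this tendsto_const_nhds
  have hPc : Continuous P := (lipschitzP P mono cadd).continuous
  -- step 1 : g is a fixed point of the normalized single-step map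
  have hrw : ∀ k, (fun x => P^[φ k] (P f) x - P^[φ k] (P f) x₀) =
      (fun x => P (fun y => P^[φ k] f y - P^[φ k] f x₀) x -
        P (fun y => P^[φ k] f y - P^[φ k] f x₀) x₀) := by
    intro k
    have h1 : P^[φ k] (P f) = P (P^[φ k] f) := by
      rw [← Function.iterate_succ_apply, Function.iterate_succ_apply']
    rw [h1]
    exact T_kills_const P cadd (P^[φ k] f) x₀
  have hh : Tendsto (fun k => fun x => P^[φ k] (P f) x - P^[φ k] (P f) x₀) atTop
      (nhds (fun x => P g x - P g x₀)) := by
    have heq : (fun k => fun x => P^[φ k] (P f) x - P^[φ k] (P f) x₀) =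
        fun k => fun x => P (fun y => P^[φ k] f y - P^[φ k] f x₀) x -
          P (fun y => P^[φ k] f y - P^[φ k] f x₀) x₀ := funext hrw
    rw [heq]
    rw [tendsto_pi_nhds]
    intro x
    have h1 : Tendsto (fun k => P (fun y => P^[φ k] f y - P^[φ k] f x₀)) atTop
        (nhds (P g)) := (hPc.tendsto g).comp hg
    exact ((tendsto_pi_nhds.1 h1) x).sub ((tendsto_pi_nhds.1 h1) x₀)
  have hTg : (fun x => P g x - P g x₀) = g :=
    (lemA P mono cadd conn x₀ f (P f) g (fun x => P g x - P g x₀) φ hφ hg hh).symm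
  -- step 2 : the normalized iterates of g are constantly g
  have hfix : ∀ n, (fun x => P^[n] g x - P^[n] g x₀) = g := by
    intro n
    induction n with
    | zero =>
      funext x
      simp [hgx₀]
    | succ n ih =>
      have h1 : P^[n + 1] g = P (P^[n] g) := Function.iterate_succ_apply' P n g
      rw [h1, T_kills_const P cadd (P^[n] g) x₀]
      have h2 : (fun y => P^[n] g y - P^[n] g x₀) = g := ih
      rw [h2, hTg]
  -- step 3 : the oscillation of P^[n] f - P^[n] g tends to 0
  set ω : ℕ → ℝ := fun n => osc (fun x => P^[n] f x - P^[n] g x) with hω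
  have hante : Antitone ω := osc_antitone P mono cadd f g
  have hbdd : BddBelow (Set.range ω) := ⟨0, fun r ⟨n, hn⟩ => hn ▸ osc_nonneg _⟩
  have hωlim : Tendsto ω atTop (nhds (⨅ n, ω n)) := tendsto_atTop_ciInf hante hbdd
  have hωnorm : ∀ n, ω n = osc (fun x => (P^[n] f x - P^[n] f x₀) - g x) := by
    intro n
    have h2 : (fun x => (P^[n] f x - P^[n] f x₀) - g x) =
        fun x => (P^[n] f x - P^[n] g x) + (P^[n] g x₀ - P^[n] f x₀) := by
      funext x
      have := congrFun (hfix n) x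
      rw [← this]
      ring
    rw [h2, osc_add_const]
  have hsub : Tendsto (fun k => fun x => (P^[φ k] f x - P^[φ k] f x₀) - g x) atTop
      (nhds (fun x => g x - g x)) := by
    rw [tendsto_pi_nhds]
    intro x
    exact (hgx x).sub tendsto_const_nhds
  have hosc0 : osc (fun x : ι => g x - g x) = 0 := by
    have h1 : (fun x : ι => g x - g x) = fun _ : ι => (0:ℝ) := by funext x; ring
    rw [h1, osc_const]
  have hlim1 : Tendsto (fun k => ω (φ k)) atTop (nhds 0) := by
    have := (continuous_osc.tendsto _).comp hsub
    rw [hosc0] at this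
    simpa [hωnorm, Function.comp_def] using this
  have hinf0 : (⨅ n, ω n) = 0 :=
    tendsto_nhds_unique (hωlim.comp hφ.tendsto_atTop) hlim1
  rw [hinf0] at hωlim
  -- step 4 : conclude convergence in the sup metric
  rw [tendsto_iff_dist_tendsto_zero]
  apply squeeze_zero (fun n => dist_nonneg) _ hωlim
  intro n
  have hnn : 0 ≤ ω n := osc_nonneg _
  rw [dist_pi_le_iff hnn]
  intro x
  rw [hωnorm n]
  set u : ι → ℝ := fun x => (P^[n] f x - P^[n] f x₀) - g x with hu
  have hux₀ : u x₀ = 0 := by simp [hu, hgx₀]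
  have h1 : u x ≤ sMax u := le_sMax u x
  have h2 : sMin u ≤ u x := sMin_le u x
  have h3 : sMin u ≤ 0 := hux₀ ▸ sMin_le u x₀
  have h4 : 0 ≤ sMax u := hux₀ ▸ le_sMax u x₀
  rw [Real.dist_eq, abs_le]
  constructor
  · simp only [hu] at h2 ⊢
    simp only [osc]
    linarith
  · simp only [hu] at h1 ⊢
    simp only [osc]
    linarith

end Pmap
end Stmt2Aux



theorem stmt2 (N : ℕ) (hN : 1 ≤ N) (x₀ : Fin N) (P : (Fin N → ℝ) → (Fin N → ℝ))
    (mono : ∀ f g : Fin N → ℝ, (∀ x, g x ≤ f x) → ∀ x, P g x ≤ P f x)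
    (smono : ∀ f g : Fin N → ℝ, (∀ x, g x ≤ f x) → ∀ x, g x < f x → P g x < P f x)
    (cadd : ∀ (f : Fin N → ℝ) (c : ℝ), P (fun x => f x + c) = fun x => P f x + c)
    (conn : ∃ n₀ : ℕ, 0 < n₀ ∧ ∀ f g : Fin N → ℝ, (∀ x, g x ≤ f x) → (∃ x, g x < f x) →
      ∀ y, P^[n₀] g y < P^[n₀] f y)
    (f ftil g gtil : Fin N → ℝ)
    (φ : ℕ → ℕ) (hφ : StrictMono φ)
    (hacc : Tendsto (fun k => fun x => P^[φ k] f x - P^[φ k] f x₀) atTop (nhds g))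
    (ψ : ℕ → ℕ) (hψ : StrictMono ψ)
    (hacctil : Tendsto (fun k => fun x => P^[ψ k] ftil x - P^[ψ k] ftil x₀) atTop (nhds gtil)) :
    g = gtil ∧
      Tendsto (fun n => fun x => P^[n] f x - P^[n] f x₀) atTop (nhds g) ∧
      Tendsto (fun n => fun x => P^[n] ftil x - P^[n] ftil x₀) atTop (nhds g) := by
  haveI : Nonempty (Fin N) := ⟨⟨0, hN⟩⟩
  have hconv : Tendsto (fun n => fun x => P^[n] f x - P^[n] f x₀) atTop (nhds g) :=
    Stmt2Aux.convLem P mono cadd conn x₀ f g φ hφ hacc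
  have hconvtil : Tendsto (fun n => fun x => P^[n] ftil x - P^[n] ftil x₀) atTop (nhds gtil) :=
    Stmt2Aux.convLem P mono cadd conn x₀ ftil gtil ψ hψ hacctil
  have heq : g = gtil :=
    Stmt2Aux.lemA P mono cadd conn x₀ f ftil g gtil id strictMono_id hconv hconvtil
  exact ⟨heq, hconv, heq ▸ hconvtil⟩
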